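/- Let N be a positive integer, L = {(b, c/N; -a, -b) : a,b,c ∈ ℤ} ⊂ Mat₂(ℚ) with quadratic form Q(X) = -N det(X). Then L is an even lattice, and its dual lattice is L' = {(b/2N, c/N; -a, -b/2N) : a,b,c ∈ ℤ}, so that L'/L ≅ ℤ/2Nℤ with induced quadratic form x ↦ x²/4N mod ℤ. -/

import Mathlib

open Matrix

/-- Membership in the lattice `L = {(b, c/N; -a, -b) : a,b,c ∈ ℤ}`. -/
def memL (N : ℕ) (X : Matrix (Fin 2) (Fin 2) ℚ) : Prop :=
  ∃ a b c : ℤ, X = !![(b : ℚ), (c : ℚ) / N; -(a : ℚ), -(b : ℚ)]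

/-- Membership in `L' = {(b/2N, c/N; -a, -b/2N) : a,b,c ∈ ℤ}`. -/
def memL' (N : ℕ) (X : Matrix (Fin 2) (Fin 2) ℚ) : Prop :=
  ∃ a b c : ℤ, X = !![(b : ℚ) / (2 * N), (c : ℚ) / N; -(a : ℚ), -(b : ℚ) / (2 * N)]

/-- The representative of the class `b ∈ ℤ/2Nℤ` in `L'`. -/
def repL' (N : ℕ) (b : ℤ) : Matrix (Fin 2) (Fin 2) ℚ :=
  !![(b : ℚ) / (2 * N), 0; 0, -(b : ℚ) / (2 * N)]

/-- `L` is even for `Q(X) = -N det X`; its dual lattice (inside the trace-zero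
matrices, w.r.t. `(X,Y) = N·tr(XY)`) is `L'`; every class of `L'/L` is
represented by some `repL' N b` with `b ∈ ℤ`, two representatives agree iff
`b ≡ b' (mod 2N)`, and the quadratic form on the class of `b` is `b²/4N`,
well defined modulo `ℤ`. Hence `L'/L ≅ ℤ/2Nℤ` with `x ↦ x²/4N mod ℤ`. -/
theorem stmt_10 (N : ℕ) (hN : 0 < N) :
    (∀ X, memL N X → ∃ k : ℤ, -(N : ℚ) * X.det = k) ∧
    (∀ X : Matrix (Fin 2) (Fin 2) ℚ, X.trace = 0 →
      (memL' N X ↔ ∀ Y, memL N Y → ∃ k : ℤ, (N : ℚ) * (X * Y).trace = k)) ∧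
    (∀ X, memL' N X → ∃ b : ℤ, memL N (X - repL' N b)) ∧
    (∀ b b' : ℤ, memL N (repL' N b - repL' N b') ↔ (2 * N : ℤ) ∣ b - b') ∧
    (∀ b : ℤ, -(N : ℚ) * (repL' N b).det = (b : ℚ) ^ 2 / (4 * N)) := by
  have hN' : (N : ℚ) ≠ 0 := Nat.cast_ne_zero.mpr hN.ne'
  refine ⟨?_, ?_, ?_, ?_, ?_⟩
  · -- evenness
    rintro X ⟨a, b, c, rfl⟩
    refine ⟨N * b ^ 2 - a * c, ?_⟩
    simp [Matrix.det_fin_two_of]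
    field_simp
    ring
  · -- dual lattice
    intro X hX
    constructor
    · rintro ⟨A, B, C, rfl⟩ Y ⟨a, b, c, rfl⟩
      refine ⟨B * b - C * a - A * c, ?_⟩
      simp [Matrix.mul_fin_two, Matrix.trace_fin_two_of]
      field_simp
      ring
    · intro h
      obtain ⟨p, q, r, s, rfl⟩ : ∃ p q r s, X = !![p, q; r, s] :=
        ⟨_, _, _, _, Matrix.eta_fin_two X⟩
      simp [Matrix.trace_fin_two_of] at hX
      obtain ⟨k1, hk1⟩ := h !![(1:ℚ), (0:ℚ)/N; -(0:ℚ), -(1:ℚ)] ⟨0, 1, 0, by norm_num⟩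
      obtain ⟨k2, hk2⟩ := h !![(0:ℚ), (1:ℚ)/N; -(0:ℚ), -(0:ℚ)] ⟨0, 0, 1, by norm_num⟩
      obtain ⟨k3, hk3⟩ := h !![(0:ℚ), (0:ℚ)/N; -(1:ℚ), -(0:ℚ)] ⟨1, 0, 0, by norm_num⟩
      simp [Matrix.mul_fin_two, Matrix.trace_fin_two_of] at hk1 hk2 hk3
      have hs : s = -p := by linarith
      subst hs
      have hp : p = (k1 : ℚ) / (2 * N) := by field_simp; linear_combination hk1
      have hr : r = (k2 : ℚ) := by field_simp at hk2; linear_combination hk2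
      have hq : q = ((-k3 : ℤ) : ℚ) / N := by push_cast; field_simp; linear_combination -hk3
      refine ⟨-k2, k1, -k3, ?_⟩
      ext i j
      fin_cases i <;> fin_cases j <;> simp [hp, hq, hr] <;> push_cast <;> ring
  · -- coset representatives
    rintro X ⟨a, b, c, rfl⟩
    refine ⟨b, a, 0, c, ?_⟩
    ext i j
    fin_cases i <;> fin_cases j <;> simp [repL']
  · -- representatives agree mod 2N
    intro b b'
    constructor
    · rintro ⟨a, B, c, hE⟩
      have h00 := congrFun (congrFun hE 0) 0
      simp [repL'] at h00
      refine ⟨B, ?_⟩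
      have : (b : ℚ) - b' = 2 * N * B := by field_simp at h00; linear_combination h00
      exact_mod_cast this
    · rintro ⟨t, ht⟩
      have hq : (b : ℚ) - b' = 2 * N * t := by exact_mod_cast congrArg (Int.cast : ℤ → ℚ) ht
      refine ⟨0, t, 0, ?_⟩
      ext i j
      fin_cases i <;> fin_cases j <;> simp [repL'] <;> field_simp <;>
        first
          | linear_combination (2 * (N : ℚ)) * hq
          | linear_combination (-(2 * (N : ℚ))) * hq
          | linear_combination hq
          | linear_combination -hq
          | ring
  · -- quadratic form on classes
    intro b
    simp [repL', Matrix.det_fin_two_of]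
    field_simp
    ring
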